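/- Let Γ ⊂ P^m be a reduced complete intersection of hypersurfaces of degrees d_1,…,d_m over F_q, and set s = (Σ d_i) − m − 1. If 1 ≤ a ≤ s, then the evaluation code C(Γ)_a has minimum distance d ≥ (Σ d_i) − a − (m−1) = s − a + 2. -/

import Mathlib

open MvPolynomial

/-- Evaluation of homogeneous degree-`a` polynomials at fixed representatives of
`n` points of `ℙ^m`. -/
noncomputable def evalMap (K : Type) [Field K] (m n a : ℕ)
    (p : Fin n → Fin (m+1) → K) :
    homogeneousSubmodule (Fin (m+1)) K a →ₗ[K] (Fin n → K) where
  toFun f i := eval (p i) (f : MvPolynomial (Fin (m+1)) K)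
  map_add' f g := by ext i; simp
  map_smul' c f := by ext i; simp [smul_eval]

/-- `h^0(𝓘_{Γ'}(a))` for the subset of `Γ` indexed by `S`. -/
noncomputable def h0 (K : Type) [Field K] (m n a : ℕ) (p : Fin n → Fin (m+1) → K)
    (S : Finset (Fin n)) : ℕ :=
  Module.finrank K (LinearMap.ker
    ((LinearMap.funLeft K K (Subtype.val : {i // i ∈ S} → Fin n)).comp (evalMap K m n a p)))

/-- `h^1(𝓘_{Γ''}(a))` for the subset of `Γ` indexed by `S`: the corank of the
degree-`a` evaluation map at those points. -/
noncomputable def h1 (K : Type) [Field K] (m n a : ℕ) (p : Fin n → Fin (m+1) → K)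
    (S : Finset (Fin n)) : ℕ :=
  S.card - Module.finrank K (LinearMap.range
    ((LinearMap.funLeft K K (Subtype.val : {i // i ∈ S} → Fin n)).comp (evalMap K m n a p)))

section Aux

variable {K : Type} [Field K]

instance hsFD (m a : ℕ) : FiniteDimensional K ↥(homogeneousSubmodule (Fin (m+1)) K a) :=
  Submodule.finiteDimensional_of_le (S₂ := restrictTotalDegree (Fin (m+1)) K a)
    (fun _f hf => (mem_restrictTotalDegree _ _ _).2
      (((mem_homogeneousSubmodule _ _).1 hf).totalDegree_le))

/-- There is a linear form vanishing at `v` but not at `u`, provided `u` is not a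
multiple of `v`. -/
lemma sep_form {m : ℕ} (u v : Fin (m+1) → K) (hv : v ≠ 0) (huv : ∀ c : K, u ≠ c • v) :
    ∃ L : MvPolynomial (Fin (m+1)) K, L.IsHomogeneous 1 ∧ eval v L = 0 ∧ eval u L ≠ 0 := by
  obtain ⟨k0, hk0⟩ := Function.ne_iff.1 hv
  simp only [Pi.zero_apply] at hk0
  obtain ⟨k, hk⟩ := Function.ne_iff.1 (huv (u k0 / v k0))
  simp only [Pi.smul_apply, smul_eq_mul] at hk
  refine ⟨C (v k0) * X k - C (v k) * X k0, ?_, ?_, ?_⟩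
  · exact (isHomogeneous_C_mul_X _ _).sub (isHomogeneous_C_mul_X _ _)
  · simp; ring
  · simp only [map_sub, map_mul, eval_C, eval_X]
    intro h
    apply hk
    field_simp
    linear_combination sub_eq_zero.mp h

/-- At most `b + 1` pairwise non-proportional nonzero points impose independent
conditions on forms of degree `b`. -/
lemma eval_surj {m n : ℕ} (p : Fin n → Fin (m+1) → K)
    (hp0 : ∀ i, p i ≠ 0)
    (hdist : ∀ i j : Fin n, i ≠ j → ∀ c : K, p i ≠ c • p j)
    (T : Finset (Fin n)) (b : ℕ) (hcard : T.card ≤ b + 1) :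
    Function.Surjective
      ((LinearMap.funLeft K K (Subtype.val : {i // i ∈ T} → Fin n)).comp
        (evalMap K m n b p)) := by
  classical
  set M := (LinearMap.funLeft K K (Subtype.val : {i // i ∈ T} → Fin n)).comp
    (evalMap K m n b p) with hM
  rw [← LinearMap.range_eq_top, ← top_le_iff]
  have hsingle : ∀ j : {i // i ∈ T}, (Pi.single (M := fun _ => K) j 1) ∈ LinearMap.range M := by
    intro j
    have hsep : ∀ j' ∈ T.erase j.1, ∃ L : MvPolynomial (Fin (m+1)) K,
        L.IsHomogeneous 1 ∧ eval (p j') L = 0 ∧ eval (p j.1) L ≠ 0 := by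
      intro j' hj'
      exact sep_form _ _ (hp0 j')
        (hdist j.1 j' (Ne.symm (Finset.ne_of_mem_erase hj')))
    choose L hL1 hL2 hL3 using hsep
    obtain ⟨k1, hk1⟩ := Function.ne_iff.1 (hp0 j.1)
    simp only [Pi.zero_apply] at hk1
    set G : MvPolynomial (Fin (m+1)) K :=
      (∏ x ∈ (T.erase j.1).attach, L x.1 x.2) * (X k1) ^ (b - (T.card - 1)) with hG
    have hprodhom : (∏ x ∈ (T.erase j.1).attach, L x.1 x.2).IsHomogeneous (T.card - 1) := by
      have := MvPolynomial.IsHomogeneous.prod (T.erase j.1).attach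
        (fun x => L x.1 x.2) (fun _ => 1) (fun x _ => hL1 x.1 x.2)
      simpa [Finset.card_erase_of_mem j.2] using this
    have hGhom : G.IsHomogeneous b := by
      have := hprodhom.mul (isHomogeneous_X_pow (R := K) k1 (b - (T.card - 1)))
      rwa [Nat.add_sub_cancel' (by omega : T.card - 1 ≤ b)] at this
    have hGi : eval (p j.1) G ≠ 0 := by
      simp only [hG, map_mul, map_prod, map_pow, eval_X]
      apply mul_ne_zero
      · rw [Finset.prod_ne_zero_iff]
        exact fun x _ => hL3 x.1 x.2
      · exact pow_ne_zero _ hk1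
    have hGj : ∀ j' : {i // i ∈ T}, j' ≠ j → eval (p j'.1) G = 0 := by
      intro j' hne
      have hmem : j'.1 ∈ T.erase j.1 :=
        Finset.mem_erase.2 ⟨fun h => hne (Subtype.ext h), j'.2⟩
      simp only [hG, map_mul, map_prod]
      exact mul_eq_zero_of_left
        (Finset.prod_eq_zero (Finset.mem_attach _ ⟨j'.1, hmem⟩) (hL2 _ _)) _
    refine ⟨(eval (p j.1) G)⁻¹ • ⟨G, hGhom⟩, ?_⟩
    ext j'
    by_cases hje : j' = j
    · subst hje
      simp [hM, evalMap, LinearMap.funLeft_apply, Pi.single_apply,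
        inv_mul_cancel₀ hGi]
    · simp [hM, evalMap, LinearMap.funLeft_apply, Pi.single_apply, hje,
        hGj j' hje]
  intro v _
  have hv : v = ∑ j : {i // i ∈ T}, v j • (Pi.single (M := fun _ => K) j 1) := by
    ext j'
    simp [Pi.single_apply]
  rw [hv]
  exact Submodule.sum_mem _ fun j _ => Submodule.smul_mem _ _ (hsingle j)

end Aux

/-- Main theorem: if `Γ ⊂ ℙ^m` is a reduced complete intersection of hypersurfaces
of degrees `d₁, …, d_m` over a finite field, `s = (Σ dᵢ) - m - 1`, and `1 ≤ a ≤ s`,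
then every nonzero codeword of the evaluation code `C(Γ)_a` has Hamming weight at
least `s - a + 2 = (Σ dᵢ) - a - (m - 1)`.  (Cayley–Bacharach is hypothesis `hCB`.) -/
theorem stmt_4 (K : Type) [Field K] [Fintype K] [DecidableEq K]
    (m n s a : ℕ) (d : Fin m → ℕ)
    (hn : n = ∏ i, d i) (hs : s + m + 1 = ∑ i, d i)
    (ha1 : 1 ≤ a) (has : a ≤ s)
    (p : Fin n → Fin (m+1) → K)
    (hp0 : ∀ i, p i ≠ 0)
    (hdist : ∀ i j : Fin n, i ≠ j → ∀ c : K, p i ≠ c • p j)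
    (F : Fin m → MvPolynomial (Fin (m+1)) K)
    (hF : ∀ i, (F i).IsHomogeneous (d i))
    (hlocus : ∀ v : Fin (m+1) → K, v ≠ 0 →
      ((∀ i, eval v (F i) = 0) ↔ ∃ (j : Fin n) (c : K), c ≠ 0 ∧ v = c • p j))
    (hCB : ∀ (S : Finset (Fin n)) (b : ℕ), b ≤ s →
      h0 K m n b p S = h0 K m n b p Finset.univ + h1 K m n (s - b) p Sᶜ) :
    ∀ w ∈ LinearMap.range (evalMap K m n a p), w ≠ 0 → s - a + 2 ≤ hammingNorm w := by
  classical
  intro w hw hw0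
  obtain ⟨f, hf⟩ := hw
  by_contra hlt
  push_neg at hlt
  set T : Finset (Fin n) := Finset.univ.filter (fun i => w i ≠ 0) with hT
  have hTcard : T.card = hammingNorm w := by
    unfold hammingNorm
    congr 1
  have hW0 : ∀ i, i ∉ T → w i = 0 := by
    intro i hi
    by_contra h
    exact hi (by simp [hT, h])
  -- h0 at the complement of the support strictly exceeds h0 at Γ
  have hker_le : LinearMap.ker ((LinearMap.funLeft K K
        (Subtype.val : {i // i ∈ (Finset.univ : Finset (Fin n))} → Fin n)).comp
        (evalMap K m n a p)) ≤
      LinearMap.ker ((LinearMap.funLeft K K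
        (Subtype.val : {i // i ∈ Tᶜ} → Fin n)).comp (evalMap K m n a p)) := by
    intro g hg
    rw [LinearMap.mem_ker] at hg ⊢
    ext j
    have := congrFun hg ⟨j.1, Finset.mem_univ _⟩
    simpa [LinearMap.funLeft_apply] using this
  have hfT : f ∈ LinearMap.ker ((LinearMap.funLeft K K
      (Subtype.val : {i // i ∈ Tᶜ} → Fin n)).comp (evalMap K m n a p)) := by
    rw [LinearMap.mem_ker]
    ext j
    have hj : j.1 ∉ T := Finset.mem_compl.1 j.2
    simp only [LinearMap.comp_apply, LinearMap.funLeft_apply, Function.comp_apply, hf,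
      Pi.zero_apply]
    exact hW0 _ hj
  have hfU : f ∉ LinearMap.ker ((LinearMap.funLeft K K
      (Subtype.val : {i // i ∈ (Finset.univ : Finset (Fin n))} → Fin n)).comp
      (evalMap K m n a p)) := by
    rw [LinearMap.mem_ker]
    intro h
    apply hw0
    ext i
    have := congrFun h ⟨i, Finset.mem_univ i⟩
    simpa [LinearMap.funLeft_apply, hf] using this
  have hlt0 : h0 K m n a p Finset.univ < h0 K m n a p Tᶜ := by
    apply Submodule.finrank_lt_finrank_of_lt
    exact SetLike.lt_iff_le_and_exists.2 ⟨hker_le, f, hfT, hfU⟩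
  have hCBa := hCB Tᶜ a has
  rw [compl_compl] at hCBa
  have hh1 : h1 K m n (s - a) p T = 0 := by
    unfold h1
    have hsurj := eval_surj p hp0 hdist T (s - a) (by omega)
    rw [LinearMap.range_eq_top.2 hsurj, finrank_top, Module.finrank_pi,
      Fintype.card_coe, Nat.sub_self]
  unfold h0 at hCBa hlt0
  omega
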